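/- Let r ≥ 2, k ≥ 1 and d ≥ r + k. Suppose S_1, …, S_r ⊆ V(Q_{d-k}) are such that (a) each S_i percolates under the i-neighbour bootstrap process on Q_{d-k}, and (c) S_1 ⊆ S_2 ⊆ ⋯ ⊆ S_{r-1}. Suppose ℓ_0 : V(Q_k) → {0,…,r} percolates under the r-meta bootstrap process on Q_k. Then the set A_0 = ⋃_{i=1}^r ⋃_{x ∈ ℓ_0^{-1}(i)} S_i^x percolates under the r-neighbour bootstrap process on Q_d, where S_i^x is the set of vertices of Q_d obtained by prefixing each vector of S_i with the k-bit string x. Consequently m(Q_d;r) ≤ Σ_{i=1}^r |ℓ_0^{-1}(i)|·|S_i|. -/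

import Mathlib

open Finset

/-- One step of the r-neighbour bootstrap process on the d-dimensional hypercube
(vertices: `Fin d → Bool`, adjacency: Hamming distance 1). -/
def bootStep (d r : ℕ) (A : Finset (Fin d → Bool)) : Finset (Fin d → Bool) :=
  A ∪ Finset.univ.filter (fun v =>
    r ≤ ((Finset.univ.filter (fun w => hammingDist v w = 1)) ∩ A).card)

/-- `A` percolates under the r-neighbour bootstrap process on `Q_d`. -/
def Percolates (d r : ℕ) (A : Finset (Fin d → Bool)) : Prop :=
  ∃ t : ℕ, (bootStep d r)^[t] A = Finset.univ

/-- `m(Q_d; r)`: minimum cardinality of a percolating set. -/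
noncomputable def mQ (d r : ℕ) : ℕ :=
  sInf {n : ℕ | ∃ A : Finset (Fin d → Bool), A.card = n ∧ Percolates d r A}

/-- One (synchronous) step of the r-meta bootstrap process on `Q_k`.
Rule 1 (Completion): a vertex of label `i` with at least `r - i` neighbours of label `r`
gets label `r`.  Rule 2 (Promotion): a vertex with at least `r` neighbours of strictly
larger label gets the r-th highest label among its neighbours, i.e. the largest `j ≤ r`
such that at least `r` neighbours have label `≥ j`. -/
def metaStep (k r : ℕ) (ℓ : (Fin k → Bool) → ℕ) : (Fin k → Bool) → ℕ := fun v =>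
  if r ≤ ℓ v + ((Finset.univ.filter (fun w => hammingDist v w = 1)).filter
      (fun w => ℓ w = r)).card then r
  else if r ≤ ((Finset.univ.filter (fun w => hammingDist v w = 1)).filter
      (fun w => ℓ v < ℓ w)).card then
    ((Finset.range (r + 1)).filter (fun j =>
      r ≤ ((Finset.univ.filter (fun w => hammingDist v w = 1)).filter
        (fun w => j ≤ ℓ w)).card)).sup id
  else ℓ v

/-- The labeling `ℓ` percolates under the r-meta bootstrap process on `Q_k`. -/
def MetaPercolates (k r : ℕ) (ℓ : (Fin k → Bool) → ℕ) : Prop :=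
  ∃ t : ℕ, (metaStep k r)^[t] ℓ = fun _ => r

namespace Stmt6Aux

lemma subset_bootStep (d r : ℕ) (A : Finset (Fin d → Bool)) : A ⊆ bootStep d r A :=
  Finset.subset_union_left

lemma subset_iterate (d r t : ℕ) (A : Finset (Fin d → Bool)) :
    A ⊆ (bootStep d r)^[t] A := by
  induction t with
  | zero => simp
  | succ t ih =>
    rw [Function.iterate_succ_apply']
    exact ih.trans (subset_bootStep d r _)

lemma iterate_le_iterate (d r : ℕ) {t u : ℕ} (h : t ≤ u) (A : Finset (Fin d → Bool)) :
    (bootStep d r)^[t] A ⊆ (bootStep d r)^[u] A := by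
  obtain ⟨s, rfl⟩ := Nat.exists_eq_add_of_le h
  rw [add_comm, Function.iterate_add_apply]
  exact subset_iterate d r s _

lemma iterate_univ (d r t : ℕ) : (bootStep d r)^[t] (Finset.univ : Finset (Fin d → Bool)) = Finset.univ :=
  Finset.univ_subset_iff.1 (subset_iterate d r t _)

lemma bootStep_zero (d : ℕ) (A : Finset (Fin d → Bool)) : bootStep d 0 A = Finset.univ := by
  apply Finset.univ_subset_iff.1
  intro v _
  exact Finset.mem_union_right _ (by simp)

lemma iterate_zero_univ (d t : ℕ) (A : Finset (Fin d → Bool)) (ht : 1 ≤ t) :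
    (bootStep d 0)^[t] A = Finset.univ := by
  obtain ⟨u, rfl⟩ := Nat.exists_eq_add_of_le ht
  rw [add_comm, Function.iterate_add_apply, Function.iterate_one, bootStep_zero, iterate_univ]

lemma iterate_univ_of_le (d r : ℕ) {t u : ℕ} (h : t ≤ u) (A : Finset (Fin d → Bool))
    (hA : (bootStep d r)^[t] A = Finset.univ) : (bootStep d r)^[u] A = Finset.univ :=
  Finset.univ_subset_iff.1 (hA ▸ iterate_le_iterate d r h A)

lemma hamming_append (k m : ℕ) (x y : Fin k → Bool) (s t : Fin m → Bool) :
    hammingDist (Fin.append x s) (Fin.append y t) = hammingDist x y + hammingDist s t := by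
  simp only [hammingDist, Finset.card_filter]
  rw [Fin.sum_univ_add]
  simp [Fin.append_left, Fin.append_right]

lemma app_right_inj (k m : ℕ) (x : Fin k → Bool) :
    Function.Injective (Fin.append x : (Fin m → Bool) → _) := by
  intro a b h
  funext i
  have := congrFun h (Fin.natAdd k i)
  simpa [Fin.append_right] using this

lemma app_left_inj (k m : ℕ) (s : Fin m → Bool) :
    Function.Injective (fun w : Fin k → Bool => Fin.append w s) := by
  intro a b h
  funext i
  have := congrFun h (Fin.castAdd m i)
  simpa [Fin.append_left] using this

lemma append_surj (k m : ℕ) (v : Fin (k + m) → Bool) :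
    v = Fin.append (fun j => v (Fin.castAdd m j)) (fun j => v (Fin.natAdd k j)) := by
  funext i
  refine Fin.addCases (fun j => ?_) (fun j => ?_) i
  · rw [Fin.append_left]
  · rw [Fin.append_right]

lemma simulate (k m r i : ℕ) (hi : i ≤ r) (t : ℕ)
    (B : Finset (Fin (k + m) → Bool)) (x : Fin k → Bool)
    (C : Finset (Fin m → Bool))
    (hC : ∀ s ∈ C, Fin.append x s ∈ B)
    (H : Finset (Fin k → Bool))
    (hH : ∀ w ∈ H, hammingDist x w = 1)
    (hHfull : ∀ w ∈ H, ∀ s : Fin m → Bool, Fin.append w s ∈ B)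
    (hcard : r - i ≤ H.card) :
    ∀ s ∈ (bootStep m i)^[t] C, Fin.append x s ∈ (bootStep (k + m) r)^[t] B := by
  induction t with
  | zero => simpa using hC
  | succ t ih =>
    rw [Function.iterate_succ_apply', Function.iterate_succ_apply']
    intro s hs
    rcases Finset.mem_union.1 hs with hs | hs
    · exact subset_bootStep _ _ _ (ih s hs)
    · simp only [mem_filter, mem_univ, true_and] at hs
      set prevC := (bootStep m i)^[t] C
      set prevB := (bootStep (k + m) r)^[t] B
      set W := (Finset.univ.filter (fun w => hammingDist s w = 1)) ∩ prevC with hW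
      have hWcard : i ≤ W.card := hs
      set E1 := W.image (Fin.append x) with hE1
      set E2 := H.image (fun w => Fin.append w s) with hE2
      have hE1card : E1.card = W.card := Finset.card_image_of_injective _ (app_right_inj k m x)
      have hE2card : E2.card = H.card := Finset.card_image_of_injective _ (app_left_inj k m s)
      have hdisj : Disjoint E1 E2 := by
        rw [Finset.disjoint_left]
        rintro e he1 he2
        simp only [hE1, hE2, Finset.mem_image] at he1 he2
        obtain ⟨a, _, rfl⟩ := he1
        obtain ⟨w, hw, hweq⟩ := he2
        have hx : x = w := by
          funext j
          have := congrFun hweq (Fin.castAdd m j)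
          simpa [Fin.append_left] using this.symm
        have := hH w hw
        rw [← hx, hammingDist_self] at this
        exact absurd this (by norm_num)
      have hsub : E1 ∪ E2 ⊆
          (Finset.univ.filter (fun u => hammingDist (Fin.append x s) u = 1)) ∩ prevB := by
        intro e he
        rcases Finset.mem_union.1 he with he | he
        · simp only [hE1, Finset.mem_image] at he
          obtain ⟨a, ha, rfl⟩ := he
          rw [hW, Finset.mem_inter, mem_filter] at ha
          refine Finset.mem_inter.2 ⟨?_, ?_⟩
          · simp only [mem_filter, mem_univ, true_and]
            rw [hamming_append, hammingDist_self]
            simpa using ha.1.2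
          · exact ih a ha.2
        · simp only [hE2, Finset.mem_image] at he
          obtain ⟨w, hw, rfl⟩ := he
          refine Finset.mem_inter.2 ⟨?_, ?_⟩
          · simp only [mem_filter, mem_univ, true_and]
            rw [hamming_append, hammingDist_self]
            simpa using hH w hw
          · exact subset_iterate _ _ _ _ (hHfull w hw s)
      have hrle : r ≤ ((Finset.univ.filter
          (fun u => hammingDist (Fin.append x s) u = 1)) ∩ prevB).card := by
        calc r ≤ i + (r - i) := by omega
        _ ≤ W.card + H.card := Nat.add_le_add hWcard hcard
        _ = (E1 ∪ E2).card := by rw [Finset.card_union_of_disjoint hdisj, hE1card, hE2card]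
        _ ≤ _ := Finset.card_le_card hsub
      exact Finset.mem_union_right _ (by simp only [mem_filter, mem_univ, true_and]; exact hrle)

lemma metaStep_le (k r : ℕ) (ℓ : (Fin k → Bool) → ℕ) (hℓ : ∀ x, ℓ x ≤ r) (x : Fin k → Bool) :
    metaStep k r ℓ x ≤ r := by
  unfold metaStep
  split
  · exact le_rfl
  · split
    · apply Finset.sup_le
      intro j hj
      have := Finset.mem_range.1 (Finset.mem_filter.1 hj).1
      simpa [id] using Nat.lt_succ_iff.1 this
    · exact hℓ x

end Stmt6Aux

namespace Stmt6Aux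

lemma one_step (d r : ℕ) (B : Finset (Fin d → Bool)) (v : Fin d → Bool)
    (E : Finset (Fin d → Bool)) (hE : r ≤ E.card)
    (hsub : E ⊆ (Finset.univ.filter (fun w => hammingDist v w = 1)) ∩ B) :
    v ∈ bootStep d r B := by
  refine Finset.mem_union_right _ ?_
  simp only [mem_filter, mem_univ, true_and]
  exact hE.trans (Finset.card_le_card hsub)

lemma metaInv (r k m : ℕ) (hr : 1 ≤ r) (S : ℕ → Finset (Fin m → Bool))
    (hnest : ∀ i j, 1 ≤ i → i ≤ j → j ≤ r - 1 → S i ⊆ S j)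
    (T : ℕ) (hT : ∀ i, 1 ≤ i → i ≤ r → (bootStep m i)^[T] (S i) = Finset.univ)
    (ℓ : (Fin k → Bool) → ℕ) (hℓ : ∀ x, ℓ x ≤ r)
    (B : Finset (Fin (k + m) → Bool))
    (hfull : ∀ x, ℓ x = r → ∀ s : Fin m → Bool, Fin.append x s ∈ B)
    (hpart : ∀ x, 1 ≤ ℓ x → ℓ x < r → ∀ s ∈ S (ℓ x), Fin.append x s ∈ B) :
    (∀ x, metaStep k r ℓ x = r →
        ∀ s : Fin m → Bool, Fin.append x s ∈ (bootStep (k + m) r)^[T + 1] B) ∧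
    (∀ x, 1 ≤ metaStep k r ℓ x → metaStep k r ℓ x < r →
        ∀ s ∈ S (metaStep k r ℓ x), Fin.append x s ∈ (bootStep (k + m) r)^[T + 1] B) := by
  have key : ∀ x : Fin k → Bool,
      (metaStep k r ℓ x = r → ∀ s : Fin m → Bool,
        Fin.append x s ∈ (bootStep (k + m) r)^[T + 1] B) ∧
      (1 ≤ metaStep k r ℓ x → metaStep k r ℓ x < r →
        ∀ s ∈ S (metaStep k r ℓ x), Fin.append x s ∈ (bootStep (k + m) r)^[T + 1] B) := by
    intro x
    by_cases h1 : r ≤ ℓ x + ((Finset.univ.filter (fun w => hammingDist x w = 1)).filter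
        (fun w => ℓ w = r)).card
    · -- Completion: new label is r
      have hms : metaStep k r ℓ x = r := by rw [metaStep, if_pos h1]
      rw [hms]
      refine ⟨fun _ => ?_, fun _ hlt => absurd hlt (lt_irrefl r)⟩
      set H := (Finset.univ.filter (fun w => hammingDist x w = 1)).filter
          (fun w => ℓ w = r) with hHdef
      have hH : ∀ w ∈ H, hammingDist x w = 1 := fun w hw =>
        (Finset.mem_filter.1 (Finset.mem_filter.1 hw).1).2
      have hHfull : ∀ w ∈ H, ∀ s : Fin m → Bool, Fin.append w s ∈ B := fun w hw =>
        hfull w (Finset.mem_filter.1 hw).2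
      rcases Nat.eq_zero_or_pos (ℓ x) with h0 | hpos
      · -- label 0: all r helpers are full subcubes
        have hcard : r - 0 ≤ H.card := by omega
        have := simulate k m r 0 (Nat.zero_le r) (T + 1) B x ∅ (by simp) H hH hHfull hcard
        intro s
        exact this s (by rw [iterate_zero_univ m (T + 1) ∅ (by omega)]; exact Finset.mem_univ s)
      · rcases eq_or_lt_of_le (hℓ x) with heq | hlt
        · -- label already r: subcube already full
          intro s
          exact subset_iterate _ _ _ _ (hfull x heq s)
        · -- 1 ≤ ℓ x < r
          have hcard : r - ℓ x ≤ H.card := by omega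
          have := simulate k m r (ℓ x) (hℓ x) T B x (S (ℓ x))
            (hpart x hpos hlt) H hH hHfull hcard
          intro s
          have hs : s ∈ (bootStep m (ℓ x))^[T] (S (ℓ x)) := by
            rw [hT (ℓ x) hpos (hℓ x)]; exact Finset.mem_univ s
          exact iterate_le_iterate _ _ (Nat.le_succ T) B (this s hs)
    · by_cases h2 : r ≤ ((Finset.univ.filter (fun w => hammingDist x w = 1)).filter
          (fun w => ℓ x < ℓ w)).card
      · -- Promotion
        have hms : metaStep k r ℓ x = ((Finset.range (r + 1)).filter (fun j =>
            r ≤ ((Finset.univ.filter (fun w => hammingDist x w = 1)).filter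
              (fun w => j ≤ ℓ w)).card)).sup id := by
          rw [metaStep, if_neg h1, if_pos h2]
        set J := ((Finset.range (r + 1)).filter (fun j =>
            r ≤ ((Finset.univ.filter (fun w => hammingDist x w = 1)).filter
              (fun w => j ≤ ℓ w)).card)) with hJdef
        have h1J : 1 ∈ J := by
          rw [hJdef, Finset.mem_filter]
          refine ⟨Finset.mem_range.2 (by omega), ?_⟩
          refine h2.trans (Finset.card_le_card ?_)
          intro w hw
          rw [Finset.mem_filter] at hw ⊢
          exact ⟨hw.1, by omega⟩
        have hJne : J.Nonempty := ⟨1, h1J⟩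
        set j := J.sup id with hjdef
        have hjJ : j ∈ J := by
          rw [hjdef, ← Finset.sup'_eq_sup hJne id]
          exact J.max'_mem hJne
        have hj1 : 1 ≤ j := Finset.le_sup (f := id) h1J
        have hjr : j ≤ r := by
          have := Finset.mem_range.1 (Finset.mem_filter.1 hjJ).1
          omega
        have hjcard : r ≤ ((Finset.univ.filter (fun w => hammingDist x w = 1)).filter
            (fun w => j ≤ ℓ w)).card := (Finset.mem_filter.1 hjJ).2
        set H := (Finset.univ.filter (fun w => hammingDist x w = 1)).filter
            (fun w => j ≤ ℓ w) with hHdef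
        have hH : ∀ w ∈ H, hammingDist x w = 1 := fun w hw =>
          (Finset.mem_filter.1 (Finset.mem_filter.1 hw).1).2
        rw [hms]
        constructor
        · -- j = r: all helpers full, whole subcube fills in one step (via simulate)
          intro hjr' s
          have hHfull : ∀ w ∈ H, ∀ s : Fin m → Bool, Fin.append w s ∈ B := by
            intro w hw s'
            have hwle := hℓ w
            have hwge : j ≤ ℓ w := (Finset.mem_filter.1 hw).2
            exact hfull w (by omega) s'
          have := simulate k m r 0 (Nat.zero_le r) (T + 1) B x ∅ (by simp) H hH hHfull
            (by omega)
          exact this s (by rw [iterate_zero_univ m (T + 1) ∅ (by omega)]; exact Finset.mem_univ s)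
        · -- 1 ≤ j < r: S j fills in one step
          intro _ hjlt s hs
          have hmem : Fin.append x s ∈ bootStep (k + m) r B := by
            refine one_step _ r B _ (H.image (fun w => Fin.append w s)) ?_ ?_
            · rw [Finset.card_image_of_injective _ (app_left_inj k m s)]; exact hjcard
            · intro e he
              obtain ⟨w, hw, rfl⟩ := Finset.mem_image.1 he
              refine Finset.mem_inter.2 ⟨?_, ?_⟩
              · simp only [mem_filter, mem_univ, true_and]
                rw [hamming_append, hammingDist_self]
                simpa using hH w hw
              · have hwge : j ≤ ℓ w := (Finset.mem_filter.1 hw).2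
                rcases eq_or_lt_of_le (hℓ w) with heq | hlt'
                · exact hfull w heq s
                · exact hpart w (by omega) hlt' s (hnest j (ℓ w) hj1 hwge (by omega) hs)
          exact iterate_le_iterate _ _ (by omega : 1 ≤ T + 1) B
            (by simpa using hmem)
      · -- label unchanged
        have hms : metaStep k r ℓ x = ℓ x := by rw [metaStep, if_neg h1, if_neg h2]
        rw [hms]
        exact ⟨fun h s => subset_iterate _ _ _ _ (hfull x h s),
          fun h1' h2' s hs => subset_iterate _ _ _ _ (hpart x h1' h2' s hs)⟩
  exact ⟨fun x => (key x).1, fun x => (key x).2⟩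

end Stmt6Aux

/-- The subcube decomposition lemma (Lemma 2.2).  Here `d = k + m` with `m ≥ r`
(equivalently `d ≥ r + k`).  `Fin.append x s` prefixes the vector `s ∈ Q_m`
with `x ∈ Q_k`. -/
theorem stmt6 (r k m : ℕ) (hr : 2 ≤ r) (hk : 1 ≤ k) (hm : r ≤ m)
    (S : ℕ → Finset (Fin m → Bool))
    (hperc : ∀ i, 1 ≤ i → i ≤ r → Percolates m i (S i))
    (hnested : ∀ i, 1 ≤ i → i + 1 ≤ r - 1 → S i ⊆ S (i + 1))
    (ℓ0 : (Fin k → Bool) → ℕ) (hℓ : ∀ x, ℓ0 x ≤ r)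
    (hmeta : MetaPercolates k r ℓ0) :
    Percolates (k + m) r
      ((Finset.Icc 1 r).biUnion (fun i =>
        (Finset.univ.filter (fun x : Fin k → Bool => ℓ0 x = i)).biUnion
          (fun x => (S i).image (fun s => Fin.append x s)))) ∧
    mQ (k + m) r ≤ ∑ i ∈ Finset.Icc 1 r,
      (Finset.univ.filter (fun x : Fin k → Bool => ℓ0 x = i)).card * (S i).card := by
  classical
  open Stmt6Aux in
  set A0 := ((Finset.Icc 1 r).biUnion (fun i =>
      (Finset.univ.filter (fun x : Fin k → Bool => ℓ0 x = i)).biUnion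
        (fun x => (S i).image (fun s => Fin.append x s)))) with hA0def
  -- uniform percolation time
  have hTex : ∃ T : ℕ, ∀ i, 1 ≤ i → i ≤ r → (bootStep m i)^[T] (S i) = Finset.univ := by
    refine ⟨(Finset.Icc 1 r).sup (fun i =>
      if h : 1 ≤ i ∧ i ≤ r then (hperc i h.1 h.2).choose else 0), ?_⟩
    intro i hi1 hi2
    have hmem : i ∈ Finset.Icc 1 r := Finset.mem_Icc.2 ⟨hi1, hi2⟩
    have hle := Finset.le_sup (f := fun i =>
      if h : 1 ≤ i ∧ i ≤ r then (hperc i h.1 h.2).choose else 0) hmem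
    rw [dif_pos (show 1 ≤ i ∧ i ≤ r from ⟨hi1, hi2⟩)] at hle
    exact Stmt6Aux.iterate_univ_of_le m i hle (S i) (hperc i hi1 hi2).choose_spec
  obtain ⟨T, hT⟩ := hTex
  -- nestedness chain
  have hnest : ∀ i j, 1 ≤ i → i ≤ j → j ≤ r - 1 → S i ⊆ S j := by
    intro i j hi hij hjr
    induction j, hij using Nat.le_induction with
    | base => exact Finset.Subset.rfl
    | succ j hij ih =>
      exact (ih (by omega)).trans (hnested j (by omega) (by omega))
  -- initial sets are in A0
  have hA0 : ∀ x : Fin k → Bool, 1 ≤ ℓ0 x → ℓ0 x ≤ r →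
      ∀ s ∈ S (ℓ0 x), Fin.append x s ∈ A0 := by
    intro x h1 h2 s hs
    rw [hA0def]
    refine Finset.mem_biUnion.2 ⟨ℓ0 x, Finset.mem_Icc.2 ⟨h1, h2⟩, ?_⟩
    refine Finset.mem_biUnion.2 ⟨x, by simp, ?_⟩
    exact Finset.mem_image.2 ⟨s, hs, rfl⟩
  -- invariant by induction on meta steps
  have hInd : ∀ n : ℕ,
      (∀ x, ((metaStep k r)^[n] ℓ0) x ≤ r) ∧
      (∀ x, ((metaStep k r)^[n] ℓ0) x = r → ∀ s : Fin m → Bool,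
        Fin.append x s ∈ (bootStep (k + m) r)^[T + n * (T + 1)] A0) ∧
      (∀ x, 1 ≤ ((metaStep k r)^[n] ℓ0) x → ((metaStep k r)^[n] ℓ0) x < r →
        ∀ s ∈ S (((metaStep k r)^[n] ℓ0) x),
          Fin.append x s ∈ (bootStep (k + m) r)^[T + n * (T + 1)] A0) := by
    intro n
    induction n with
    | zero =>
      simp only [Function.iterate_zero, id_eq, Nat.zero_mul, Nat.add_zero]
      refine ⟨hℓ, ?_, ?_⟩
      · intro x hx s
        have hC : ∀ s ∈ S r, Fin.append x s ∈ A0 := by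
          intro s hs
          exact hA0 x (by omega) (le_of_eq hx) s (by rw [hx]; exact hs)
        have := Stmt6Aux.simulate k m r r le_rfl T A0 x (S r) hC ∅
          (by simp) (by simp) (by simp)
        exact this s (by rw [hT r (by omega) le_rfl]; exact Finset.mem_univ s)
      · intro x h1 h2 s hs
        exact Stmt6Aux.subset_iterate _ _ _ _ (hA0 x h1 (le_of_lt h2) s hs)
    | succ n ih =>
      obtain ⟨ihle, ihfull, ihpart⟩ := ih
      have hstep := Stmt6Aux.metaInv r k m (by omega) S hnest T hT
        ((metaStep k r)^[n] ℓ0) ihle ((bootStep (k + m) r)^[T + n * (T + 1)] A0)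
        ihfull ihpart
      have harith : (T + 1) + (T + n * (T + 1)) = T + (n + 1) * (T + 1) := by ring
      have hiter : (bootStep (k + m) r)^[T + 1]
          ((bootStep (k + m) r)^[T + n * (T + 1)] A0)
          = (bootStep (k + m) r)^[T + (n + 1) * (T + 1)] A0 := by
        rw [← Function.iterate_add_apply, harith]
      rw [hiter] at hstep
      refine ⟨?_, ?_, ?_⟩
      · intro x
        rw [Function.iterate_succ_apply']
        exact Stmt6Aux.metaStep_le k r _ ihle x
      · intro x
        rw [Function.iterate_succ_apply']
        exact hstep.1 x
      · intro x
        rw [Function.iterate_succ_apply']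
        exact hstep.2 x
  -- percolation
  obtain ⟨t0, ht0⟩ := hmeta
  have hperc0 : Percolates (k + m) r A0 := by
    refine ⟨T + t0 * (T + 1), ?_⟩
    apply Finset.univ_subset_iff.1
    intro v _
    have hfull := (hInd t0).2.1
    rw [ht0] at hfull
    have := hfull (fun j => v (Fin.castAdd m j)) rfl (fun j => v (Fin.natAdd k j))
    rwa [← Stmt6Aux.append_surj] at this
  refine ⟨hperc0, ?_⟩
  -- cardinality bound
  have hcard : A0.card ≤ ∑ i ∈ Finset.Icc 1 r,
      (Finset.univ.filter (fun x : Fin k → Bool => ℓ0 x = i)).card * (S i).card := by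
    rw [hA0def]
    refine (Finset.card_biUnion_le).trans (Finset.sum_le_sum ?_)
    intro i _
    refine (Finset.card_biUnion_le).trans ?_
    calc ∑ x ∈ Finset.univ.filter (fun x : Fin k → Bool => ℓ0 x = i),
          ((S i).image (fun s => Fin.append x s)).card
        ≤ ∑ _x ∈ Finset.univ.filter (fun x : Fin k → Bool => ℓ0 x = i), (S i).card :=
          Finset.sum_le_sum (fun x _ => Finset.card_image_le)
      _ = _ := by rw [Finset.sum_const, smul_eq_mul]
  have hmQ : mQ (k + m) r ≤ A0.card :=
    Nat.sInf_le ⟨A0, rfl, hperc0⟩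
  exact hmQ.trans hcard
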